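/- Let S be a finite set with |S| = κ ≥ 2, α > 1, and let m_⋆ : S → (0,1] with m_⋆(y) ≤ 1 for all y. Fix x ∈ S. There exists a finite constant C_κ depending only on κ and α such that for all integers ℓ and N with N > ℓ ≥ 0, N^α Σ_{η ∈ E_N : η_x ≥ N - ℓ} m_⋆^η / a(η) ≤ C_κ · m_⋆(x)^{N-ℓ}, where m_⋆^η = Π_{z∈S} m_⋆(z)^{η_z}. -/

import Mathlib

noncomputable def aZR (α : ℝ) (n : ℕ) : ℝ := if n = 0 then 1 else (n : ℝ) ^ α

def confs (S : Type*) [Fintype S] [DecidableEq S] (N : ℕ) : Finset (S → ℕ) :=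
  (Fintype.piFinset fun _ => Finset.range (N + 1)).filter (fun η => ∑ x, η x = N)

lemma aZR_pos (α : ℝ) (n : ℕ) : 0 < aZR α n := by
  rcases eq_or_ne n 0 with h | h
  · simp [aZR, h]
  · simp only [aZR, h, if_false]
    exact Real.rpow_pos_of_pos (by exact_mod_cast Nat.pos_of_ne_zero h) α

theorem exponential_decay_condensate_bound (S : Type*) [Fintype S] [DecidableEq S]
    (hκ : 2 ≤ Fintype.card S) (α : ℝ) (hα : 1 < α)
    (mstar : S → ℝ) (hm : ∀ y, 0 < mstar y ∧ mstar y ≤ 1) (x : S) :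
    ∃ C : ℝ, 0 < C ∧ ∀ ℓ N : ℕ, ℓ < N →
      (N : ℝ) ^ α *
        ∑ η ∈ (confs S N).filter (fun η => N - ℓ ≤ η x),
          ∏ z, mstar z ^ η z / aZR α (η z) ≤ C * mstar x ^ (N - ℓ) := by
  classical
  set κ : ℕ := Fintype.card S with hκdef
  have hκpos : 0 < κ := by omega
  have hNe : Nonempty S := Fintype.card_pos_iff.mp hκpos
  have hsummable : Summable (fun n : ℕ => ((n : ℝ) ^ α)⁻¹) :=
    Real.summable_nat_rpow_inv.mpr hα
  set K : ℝ := 1 + ∑' n : ℕ, ((n : ℝ) ^ α)⁻¹ with hKdef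
  have hK1 : 1 ≤ K := le_add_of_nonneg_right (tsum_nonneg fun n => by positivity)
  have hK0 : 0 < K := lt_of_lt_of_le one_pos hK1
  have hKrange : ∀ N : ℕ, ∑ n ∈ Finset.range (N + 1), (aZR α n)⁻¹ ≤ K := by
    intro N
    have h1 : ∀ n ∈ Finset.range (N + 1),
        (aZR α n)⁻¹ ≤ (if n = 0 then 1 else 0) + ((n : ℝ) ^ α)⁻¹ := by
      intro n _
      rcases eq_or_ne n 0 with h | h
      · simp [aZR, h, Real.zero_rpow (by linarith : α ≠ 0)]
      · simp [aZR, h]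
    calc ∑ n ∈ Finset.range (N + 1), (aZR α n)⁻¹
        ≤ ∑ n ∈ Finset.range (N + 1), ((if n = 0 then 1 else 0) + ((n : ℝ) ^ α)⁻¹) :=
          Finset.sum_le_sum h1
      _ = (∑ n ∈ Finset.range (N + 1), (if n = 0 then (1 : ℝ) else 0))
            + ∑ n ∈ Finset.range (N + 1), ((n : ℝ) ^ α)⁻¹ := Finset.sum_add_distrib
      _ ≤ 1 + ∑' n : ℕ, ((n : ℝ) ^ α)⁻¹ := by
          apply add_le_add
          · rw [Finset.sum_ite_eq' (Finset.range (N + 1)) 0 (fun _ => (1 : ℝ))]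
            simp
          · exact Summable.sum_le_tsum _ (fun i _ => by positivity) hsummable
  have hκR : (0 : ℝ) < (κ : ℝ) := by exact_mod_cast hκpos
  set C : ℝ := (κ : ℝ) * ((κ : ℝ) ^ α * K ^ (κ - 1)) with hCdef
  have hC : 0 < C :=
    mul_pos hκR (mul_pos (Real.rpow_pos_of_pos hκR α) (pow_pos hK0 _))
  refine ⟨C, hC, ?_⟩
  intro ℓ N hℓN
  have hN1 : 0 < N := lt_of_le_of_lt (Nat.zero_le ℓ) hℓN
  set g : (S → ℕ) → ℝ := fun η => ∏ z, (aZR α (η z))⁻¹ with hg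
  have hgnonneg : ∀ η, 0 ≤ g η :=
    fun η => Finset.prod_nonneg fun z _ => inv_nonneg.mpr (aZR_pos α (η z)).le
  -- covering
  have hcov : ∀ η ∈ confs S N, ∃ y : S, N ≤ κ * η y := by
    intro η hη
    have hηs : ∑ z, η z = N := (Finset.mem_filter.mp hη).2
    have h1 : ∑ _z : S, N = κ * N := by
      simp [Finset.sum_const, Finset.card_univ, mul_comm, hκdef]
    have h2 : ∑ z : S, κ * η z = κ * N := by rw [← Finset.mul_sum, hηs]
    obtain ⟨y, _, hy⟩ := Finset.exists_le_of_sum_le Finset.univ_nonempty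
      (by rw [h1, h2] : ∑ _z : S, N ≤ ∑ z : S, κ * η z)
    exact ⟨y, hy⟩
  set f' : (S → ℕ) → ℝ := fun η => (N : ℝ) ^ α * g η with hf'
  have hf'nonneg : ∀ η, 0 ≤ f' η :=
    fun η => mul_nonneg (Real.rpow_nonneg (Nat.cast_nonneg N) α) (hgnonneg η)
  have hcover : ∑ η ∈ confs S N, f' η ≤
      ∑ y : S, ∑ η ∈ (confs S N).filter (fun η => N ≤ κ * η y), f' η := by
    calc ∑ η ∈ confs S N, f' η
        ≤ ∑ η ∈ confs S N, ∑ y : S, (if N ≤ κ * η y then f' η else 0) := by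
          apply Finset.sum_le_sum
          intro η hη
          obtain ⟨y, hy⟩ := hcov η hη
          have := Finset.single_le_sum
            (f := fun y => if N ≤ κ * η y then f' η else 0)
            (fun y _ => by by_cases h : N ≤ κ * η y <;> simp [h, hf'nonneg η])
            (Finset.mem_univ y)
          simpa [hy] using this
      _ = ∑ y : S, ∑ η ∈ (confs S N).filter (fun η => N ≤ κ * η y), f' η := by
          rw [Finset.sum_comm]
          exact Finset.sum_congr rfl fun y _ => (Finset.sum_filter _ _).symm
  -- per-site bound
  have hy : ∀ y : S, ∑ η ∈ (confs S N).filter (fun η => N ≤ κ * η y), f' η ≤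
      (κ : ℝ) ^ α * K ^ (κ - 1) := by
    intro y
    have hterm : ∀ η ∈ (confs S N).filter (fun η => N ≤ κ * η y),
        f' η ≤ (κ : ℝ) ^ α * ∏ z ∈ Finset.univ.erase y, (aZR α (η z))⁻¹ := by
      intro η hη
      obtain ⟨hηc, hηy⟩ := Finset.mem_filter.mp hη
      have hηy1 : 1 ≤ η y := by
        by_contra h
        push_neg at h
        have : η y = 0 := by omega
        rw [this, mul_zero] at hηy
        omega
      have hfact : g η = (aZR α (η y))⁻¹ * ∏ z ∈ Finset.univ.erase y, (aZR α (η z))⁻¹ :=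
        (Finset.mul_prod_erase _ _ (Finset.mem_univ y)).symm
      have hprodnn : 0 ≤ ∏ z ∈ Finset.univ.erase y, (aZR α (η z))⁻¹ :=
        Finset.prod_nonneg fun z _ => inv_nonneg.mpr (aZR_pos α (η z)).le
      rw [hf'] ; dsimp only
      rw [hfact, ← mul_assoc]
      apply mul_le_mul_of_nonneg_right _ hprodnn
      have hane : aZR α (η y) = ((η y : ℕ) : ℝ) ^ α := by
        simp [aZR, Nat.pos_iff_ne_zero.mp hηy1]
      rw [hane]
      have hpos : (0 : ℝ) < ((η y : ℕ) : ℝ) ^ α :=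
        Real.rpow_pos_of_pos (by exact_mod_cast hηy1) α
      rw [mul_inv_le_iff₀ hpos]
      rw [← Real.mul_rpow (by positivity) (by positivity)]
      apply Real.rpow_le_rpow (Nat.cast_nonneg N) _ (by linarith)
      exact_mod_cast hηy
    calc ∑ η ∈ (confs S N).filter (fun η => N ≤ κ * η y), f' η
        ≤ ∑ η ∈ (confs S N).filter (fun η => N ≤ κ * η y),
            (κ : ℝ) ^ α * ∏ z ∈ Finset.univ.erase y, (aZR α (η z))⁻¹ :=
          Finset.sum_le_sum hterm
      _ = (κ : ℝ) ^ α * ∑ η ∈ (confs S N).filter (fun η => N ≤ κ * η y),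
            ∏ z ∈ Finset.univ.erase y, (aZR α (η z))⁻¹ := (Finset.mul_sum _ _ _).symm
      _ ≤ (κ : ℝ) ^ α * K ^ (κ - 1) := by
          apply mul_le_mul_of_nonneg_left _ (Real.rpow_nonneg hκR.le α)
          -- injection into piFinset
          set F := (confs S N).filter (fun η => N ≤ κ * η y) with hF
          set i : (S → ℕ) → (S → ℕ) := fun η => Function.update η y 0 with hi
          have hqi : ∀ η, ∏ z ∈ Finset.univ.erase y, (aZR α ((i η) z))⁻¹
              = ∏ z ∈ Finset.univ.erase y, (aZR α (η z))⁻¹ := by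
            intro η
            apply Finset.prod_congr rfl
            intro z hz
            rw [hi]
            simp [Function.update_of_ne (Finset.ne_of_mem_erase hz)]
          have hinj : Set.InjOn i F := by
            intro η1 h1 η2 h2 heq
            have hs1 : ∑ z, η1 z = N := (Finset.mem_filter.mp ((Finset.mem_filter.mp h1).1)).2
            have hs2 : ∑ z, η2 z = N := (Finset.mem_filter.mp ((Finset.mem_filter.mp h2).1)).2
            have hoff : ∀ z, z ≠ y → η1 z = η2 z := by
              intro z hz
              have := congrFun heq z
              simpa [hi, Function.update_of_ne hz] using this
            have hsum : ∑ z ∈ Finset.univ.erase y, η1 z = ∑ z ∈ Finset.univ.erase y, η2 z :=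
              Finset.sum_congr rfl fun z hz => hoff z (Finset.ne_of_mem_erase hz)
            have e1 : η1 y + ∑ z ∈ Finset.univ.erase y, η1 z = N := by
              rw [Finset.add_sum_erase _ _ (Finset.mem_univ y), hs1]
            have e2 : η2 y + ∑ z ∈ Finset.univ.erase y, η2 z = N := by
              rw [Finset.add_sum_erase _ _ (Finset.mem_univ y), hs2]
            funext z
            by_cases hz : z = y
            · subst hz; omega
            · exact hoff z hz
          set t := Fintype.piFinset
            (fun z : S => if z = y then ({0} : Finset ℕ) else Finset.range (N + 1)) with ht
          have hsub : F.image i ⊆ t := by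
            intro ξ hξ
            obtain ⟨η, hη, rfl⟩ := Finset.mem_image.mp hξ
            have hηpf : η ∈ Fintype.piFinset fun _ : S => Finset.range (N + 1) :=
              (Finset.mem_filter.mp ((Finset.mem_filter.mp hη).1)).1
            rw [ht, Fintype.mem_piFinset]
            intro z
            by_cases hz : z = y
            · subst hz; simp [hi]
            · simp only [hz, if_false, hi, Function.update_of_ne hz]
              exact Fintype.mem_piFinset.mp hηpf z
          set h : S → ℕ → ℝ := fun z n => if z = y then 1 else (aZR α n)⁻¹ with hh
          have hq_h : ∀ ξ : S → ℕ,
              ∏ z ∈ Finset.univ.erase y, (aZR α (ξ z))⁻¹ = ∏ z : S, h z (ξ z) := by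
            intro ξ
            rw [← Finset.mul_prod_erase Finset.univ (fun z => h z (ξ z)) (Finset.mem_univ y)]
            have : h y (ξ y) = 1 := by simp [hh]
            rw [this, one_mul]
            exact Finset.prod_congr rfl fun z hz => by
              simp [hh, Finset.ne_of_mem_erase hz]
          calc ∑ η ∈ F, ∏ z ∈ Finset.univ.erase y, (aZR α (η z))⁻¹
              = ∑ ξ ∈ F.image i, ∏ z ∈ Finset.univ.erase y, (aZR α (ξ z))⁻¹ := by
                rw [Finset.sum_image (fun a ha b hb hab => hinj ha hb hab)]
                exact (Finset.sum_congr rfl fun η _ => (hqi η).symm)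
            _ ≤ ∑ ξ ∈ t, ∏ z ∈ Finset.univ.erase y, (aZR α (ξ z))⁻¹ :=
                Finset.sum_le_sum_of_subset_of_nonneg hsub
                  (fun ξ _ _ => Finset.prod_nonneg fun z _ => inv_nonneg.mpr (aZR_pos α (ξ z)).le)
            _ = ∏ z : S, ∑ n ∈ (if z = y then ({0} : Finset ℕ) else Finset.range (N + 1)),
                  h z n := by
                rw [Finset.prod_univ_sum]
                exact Finset.sum_congr rfl fun ξ _ => hq_h ξ
            _ ≤ K ^ (κ - 1) := by
                rw [← Finset.mul_prod_erase Finset.univ _ (Finset.mem_univ y)]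
                have h1 : ∑ n ∈ (if y = y then ({0} : Finset ℕ) else Finset.range (N + 1)),
                    h y n = 1 := by simp [hh]
                rw [h1, one_mul]
                have h2 : ∀ z ∈ Finset.univ.erase y,
                    ∑ n ∈ (if z = y then ({0} : Finset ℕ) else Finset.range (N + 1)), h z n
                      ≤ K := by
                  intro z hz
                  have hzy : z ≠ y := Finset.ne_of_mem_erase hz
                  simp only [hzy, if_false, hh]
                  exact hKrange N
                calc ∏ z ∈ Finset.univ.erase y,
                      ∑ n ∈ (if z = y then ({0} : Finset ℕ) else Finset.range (N + 1)), h z n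
                    ≤ ∏ _z ∈ Finset.univ.erase y, K := by
                      apply Finset.prod_le_prod _ h2
                      intro z hz
                      have hzy : z ≠ y := Finset.ne_of_mem_erase hz
                      simp only [hzy, if_false, hh]
                      exact Finset.sum_nonneg fun n _ => inv_nonneg.mpr (aZR_pos α n).le
                  _ = K ^ (κ - 1) := by
                      rw [Finset.prod_const, Finset.card_erase_of_mem (Finset.mem_univ y),
                        Finset.card_univ]
  have hcore : (N : ℝ) ^ α * ∑ η ∈ confs S N, g η ≤ C := by
    rw [Finset.mul_sum]
    calc ∑ η ∈ confs S N, (N : ℝ) ^ α * g η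
        ≤ ∑ y : S, ∑ η ∈ (confs S N).filter (fun η => N ≤ κ * η y), f' η := hcover
      _ ≤ ∑ _y : S, (κ : ℝ) ^ α * K ^ (κ - 1) := Finset.sum_le_sum fun y _ => hy y
      _ = C := by
          rw [Finset.sum_const, Finset.card_univ, nsmul_eq_mul, hCdef]
  -- main chain
  have hmx := hm x
  have hpownn : 0 ≤ mstar x ^ (N - ℓ) := pow_nonneg hmx.1.le _
  have hstep1 : ∀ η ∈ (confs S N).filter (fun η => N - ℓ ≤ η x),
      ∏ z, mstar z ^ η z / aZR α (η z) ≤ mstar x ^ (N - ℓ) * g η := by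
    intro η hη
    obtain ⟨hηc, hηx⟩ := Finset.mem_filter.mp hη
    have h1 : ∏ z, mstar z ^ η z / aZR α (η z) = (∏ z, mstar z ^ η z) * g η := by
      rw [hg]; dsimp only
      rw [← Finset.prod_mul_distrib]
      exact Finset.prod_congr rfl fun z _ => div_eq_mul_inv _ _
    rw [h1]
    have h2 : ∏ z, mstar z ^ η z ≤ mstar x ^ η x := by
      calc ∏ z, mstar z ^ η z
          = mstar x ^ η x * ∏ z ∈ Finset.univ.erase x, mstar z ^ η z :=
            (Finset.mul_prod_erase _ _ (Finset.mem_univ x)).symm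
        _ ≤ mstar x ^ η x * 1 := by
            apply mul_le_mul_of_nonneg_left _ (pow_nonneg hmx.1.le _)
            exact Finset.prod_le_one (fun z _ => pow_nonneg (hm z).1.le _)
              (fun z _ => pow_le_one₀ (hm z).1.le (hm z).2)
        _ = mstar x ^ η x := mul_one _
    have h3 : mstar x ^ η x ≤ mstar x ^ (N - ℓ) :=
      pow_le_pow_of_le_one hmx.1.le hmx.2 hηx
    exact mul_le_mul_of_nonneg_right (h2.trans h3) (hgnonneg η)
  calc (N : ℝ) ^ α * ∑ η ∈ (confs S N).filter (fun η => N - ℓ ≤ η x),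
        ∏ z, mstar z ^ η z / aZR α (η z)
      ≤ (N : ℝ) ^ α * (mstar x ^ (N - ℓ) *
          ∑ η ∈ (confs S N).filter (fun η => N - ℓ ≤ η x), g η) := by
        apply mul_le_mul_of_nonneg_left _ (Real.rpow_nonneg (Nat.cast_nonneg N) α)
        rw [Finset.mul_sum]
        exact Finset.sum_le_sum hstep1
    _ = mstar x ^ (N - ℓ) * ((N : ℝ) ^ α *
          ∑ η ∈ (confs S N).filter (fun η => N - ℓ ≤ η x), g η) := by ring
    _ ≤ mstar x ^ (N - ℓ) * ((N : ℝ) ^ α * ∑ η ∈ confs S N, g η) := by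
        apply mul_le_mul_of_nonneg_left _ hpownn
        apply mul_le_mul_of_nonneg_left _ (Real.rpow_nonneg (Nat.cast_nonneg N) α)
        exact Finset.sum_le_sum_of_subset_of_nonneg (Finset.filter_subset _ _)
          (fun η _ _ => hgnonneg η)
    _ ≤ mstar x ^ (N - ℓ) * C := mul_le_mul_of_nonneg_left hcore hpownn
    _ = C * mstar x ^ (N - ℓ) := mul_comm _ _
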